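/- Let X₁, …, Xₙ be independent random variables on a probability space, each almost surely positive, let a₁, …, aₙ > 0, let Y = ∑_{i=1}^n aᵢ·Xᵢ, and let μ be the law of Y. Assume E[Xⱼ] < ∞ and E[exp(t·Xⱼ)] < ∞ for all needed t for each j, and let M_{Xᵢ}(t) = E[exp(t·Xᵢ)]. Let g(x) = ∫ (ε/2)·exp(−ε·|x|) dμ(ε) and Δq > 0. Then the mixture Laplace mechanism driven by μ is ε₀-differentially private with ε₀ = ln[ (∑_{j=1}^n aⱼ·E[Xⱼ]) / ( ∑_{j=1}^n aⱼ·E[Xⱼ·exp(−aⱼ·Δq·Xⱼ)] · ∏_{i≠j} M_{Xᵢ}(−aᵢ·Δq) ) ]. -/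

import Mathlib

open MeasureTheory Real ProbabilityTheory

lemma aux_prod_integral {Ω : Type*} {ι : Type*} [MeasureSpace Ω]
    [IsProbabilityMeasure (ℙ : Measure Ω)]
    {G : ι → Ω → ℝ} (hindep : iIndepFun G ℙ)
    (hmeas : ∀ i, Measurable (G i)) (hint : ∀ i, Integrable (G i) ℙ) :
    ∀ s : Finset ι, Integrable (fun ω => ∏ i ∈ s, G i ω) ℙ ∧
      (∫ ω, ∏ i ∈ s, G i ω) = ∏ i ∈ s, ∫ ω, G i ω := by
  classical
  intro s
  induction s using Finset.induction_on with
  | empty => simp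
  | @insert i s hi ih =>
    have hIF : IndepFun (∏ j ∈ s, G j) (G i) ℙ :=
      hindep.indepFun_finsetProd_of_notMem hmeas hi
    have hps : (fun ω => ∏ j ∈ s, G j ω) = (∏ j ∈ s, G j) := by
      funext ω; simp [Finset.prod_apply]
    have hPint : Integrable (∏ j ∈ s, G j) ℙ := hps ▸ ih.1
    have hmul : Integrable ((∏ j ∈ s, G j) * G i) ℙ :=
      hIF.integrable_mul hPint (hint i)
    constructor
    · have : (fun ω => ∏ j ∈ insert i s, G j ω) = (∏ j ∈ s, G j) * G i := by
        funext ω; simp [Finset.prod_insert hi, Finset.prod_apply]; ring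
      rw [this]; exact hmul
    · have h1 : (∫ ω, ∏ j ∈ insert i s, G j ω) = ∫ ω, ((∏ j ∈ s, G j) * G i) ω := by
        congr 1; funext ω; simp [Finset.prod_insert hi, Finset.prod_apply]; ring
      rw [h1, hIF.integral_mul_eq_mul_integral hPint.1 (hint i).1, Finset.prod_insert hi,
        ← ih.2, hps]
      ring

lemma aux_corr {Ω : Type*} [MeasureSpace Ω] [IsProbabilityMeasure (ℙ : Measure Ω)]
    {Y : Ω → ℝ} (hYpos : ∀ᵐ ω ∂(ℙ : Measure Ω), 0 ≤ Y ω)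
    (hints : ∀ u : ℝ, 0 ≤ u → Integrable (fun ω => Y ω * Real.exp (-(u * Y ω))) ℙ)
    (s t : ℝ) (hs : 0 ≤ s) (ht : 0 ≤ t) :
    (∫ ω, Y ω * Real.exp (-(s * Y ω))) * (∫ ω, Y ω * Real.exp (-(t * Y ω))) ≤
      (∫ ω, Y ω * Real.exp (-(0 * Y ω))) * (∫ ω, Y ω * Real.exp (-((s + t) * Y ω))) := by
  set P : Measure (Ω × Ω) := (ℙ : Measure Ω).prod ℙ with hP
  set f : ℝ → Ω → ℝ := fun u ω => Y ω * Real.exp (-(u * Y ω)) with hf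
  have hFint : ∀ u v : ℝ, 0 ≤ u → 0 ≤ v →
      Integrable (fun z : Ω × Ω => f u z.1 * f v z.2) P :=
    fun u v hu hv => (hints u hu).mul_prod (hints v hv)
  have hFeq : ∀ u v : ℝ, (∫ z : Ω × Ω, f u z.1 * f v z.2 ∂P) =
      (∫ ω, f u ω) * ∫ ω, f v ω := fun u v => integral_prod_mul (f u) (f v)
  have key : (0:ℝ) ≤ ∫ z : Ω × Ω,
      ((f (s+t) z.1 * f 0 z.2 - f s z.1 * f t z.2) - f t z.1 * f s z.2)
        + f 0 z.1 * f (s+t) z.2 ∂P := by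
    apply integral_nonneg_of_ae
    have h1 : ∀ᵐ z ∂P, 0 ≤ Y z.1 :=
      (Measure.quasiMeasurePreserving_fst).ae hYpos
    have h2 : ∀ᵐ z ∂P, 0 ≤ Y z.2 :=
      (Measure.quasiMeasurePreserving_snd).ae hYpos
    filter_upwards [h1, h2] with z hz1 hz2
    set y := Y z.1; set y' := Y z.2
    have hid : ((f (s+t) z.1 * f 0 z.2 - f s z.1 * f t z.2) - f t z.1 * f s z.2)
        + f 0 z.1 * f (s+t) z.2 =
        (y * y') * ((Real.exp (-(s*y)) - Real.exp (-(s*y'))) *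
          (Real.exp (-(t*y)) - Real.exp (-(t*y')))) := by
      simp only [hf, neg_add, add_mul, Real.exp_add, zero_mul, neg_zero, Real.exp_zero]
      ring
    rw [hid]
    have hAB : 0 ≤ (Real.exp (-(s*y)) - Real.exp (-(s*y'))) *
        (Real.exp (-(t*y)) - Real.exp (-(t*y'))) := by
      rcases le_total y y' with h | h
      · have a1 : Real.exp (-(s*y')) ≤ Real.exp (-(s*y)) :=
          Real.exp_le_exp.2 (by nlinarith)
        have a2 : Real.exp (-(t*y')) ≤ Real.exp (-(t*y)) :=
          Real.exp_le_exp.2 (by nlinarith)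
        nlinarith
      · have a1 : Real.exp (-(s*y)) ≤ Real.exp (-(s*y')) :=
          Real.exp_le_exp.2 (by nlinarith)
        have a2 : Real.exp (-(t*y)) ≤ Real.exp (-(t*y')) :=
          Real.exp_le_exp.2 (by nlinarith)
        nlinarith
    exact mul_nonneg (mul_nonneg hz1 hz2) hAB
  have hst : (0:ℝ) ≤ s + t := by linarith
  have h12 : Integrable (fun z : Ω × Ω => f (s+t) z.1 * f 0 z.2 - f s z.1 * f t z.2) P :=
    (hFint _ _ hst le_rfl).sub (hFint _ _ hs ht)
  have h123 : Integrable (fun z : Ω × Ω =>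
      (f (s+t) z.1 * f 0 z.2 - f s z.1 * f t z.2) - f t z.1 * f s z.2) P :=
    h12.sub (hFint _ _ ht hs)
  rw [integral_add h123 (hFint _ _ le_rfl hst), integral_sub h12 (hFint _ _ ht hs),
    integral_sub (hFint _ _ hst le_rfl) (hFint _ _ hs ht), hFeq, hFeq, hFeq, hFeq] at key
  simp only [hf] at key ⊢
  nlinarith [key]

/-- Differential privacy of a Randomized DP Laplace mechanism whose reciprocal scale
`1/b` is a linear combination `Y = ∑ aᵢ·Xᵢ` of independent positive random variables:
it is `ln[ (∑ aⱼ E[Xⱼ]) / (∑ aⱼ E[Xⱼ exp(−aⱼΔq Xⱼ)] ∏_{i≠j} M_{Xᵢ}(−aᵢΔq)) ]`-DP. -/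
theorem mixture_laplace_linear_combination_dp
    {Ω : Type*} [MeasureSpace Ω] [IsProbabilityMeasure (ℙ : Measure Ω)]
    (n : ℕ) (X : Fin n → Ω → ℝ)
    (hXmeas : ∀ i, Measurable (X i))
    (hXindep : iIndepFun X ℙ)
    (hXpos : ∀ i, ∀ᵐ ω ∂(ℙ : Measure Ω), 0 < X i ω)
    (a : Fin n → ℝ) (ha : ∀ i, 0 < a i)
    (hXint : ∀ j, Integrable (X j) ℙ)
    (hXexp : ∀ j, ∀ t : ℝ, t ≤ 0 → Integrable (fun ω => Real.exp (t * X j ω)) ℙ)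
    (M : Fin n → ℝ → ℝ)
    (hM : ∀ i, ∀ t : ℝ, M i t = ∫ ω, Real.exp (t * X i ω))
    (Y : Ω → ℝ) (hY : ∀ ω, Y ω = ∑ i, a i * X i ω)
    (μ : Measure ℝ) (hμ : μ = Measure.map Y ℙ)
    (g : ℝ → ℝ)
    (hg : ∀ x : ℝ, g x = ∫ ε, (ε / 2) * Real.exp (-(ε * |x|)) ∂μ)
    (Δq : ℝ) (hΔq : 0 < Δq)
    (ε₀ : ℝ)
    (hε₀ : ε₀ = Real.log ((∑ j, a j * ∫ ω, X j ω) /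
      (∑ j, a j * (∫ ω, X j ω * Real.exp (-(a j * Δq) * X j ω)) *
        ∏ i ∈ Finset.univ.erase j, M i (-(a i * Δq))))) :
    ∀ S : Set ℝ, MeasurableSet S → ∀ c c' : ℝ, |c - c'| ≤ Δq →
      ∫ x in S, g (x - c) ≤ Real.exp ε₀ * ∫ x in S, g (x - c') := by
  classical
  intro S hS c c' hcc
  -- basic facts about Y
  have hYfun : Y = fun ω => ∑ i, a i * X i ω := funext hY
  have hYm : Measurable Y := by
    rw [hYfun]; exact Finset.measurable_sum _ fun i _ => (hXmeas i).const_mul _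
  have hYpos : ∀ᵐ ω ∂(ℙ : Measure Ω), 0 ≤ Y ω := by
    filter_upwards [(MeasureTheory.ae_all_iff).2 hXpos] with ω hω
    rw [hY ω]
    exact Finset.sum_nonneg fun i _ => le_of_lt (mul_pos (ha i) (hω i))
  have hYint : Integrable Y ℙ := by
    rw [hYfun]; exact integrable_finset_sum _ fun i _ => (hXint i).const_mul _
  -- integrability of Y e^{-uY}
  have hLint : ∀ u : ℝ, 0 ≤ u → Integrable (fun ω => Y ω * Real.exp (-(u * Y ω))) ℙ := by
    intro u hu
    refine hYint.mono ((hYm.mul ((hYm.const_mul u).neg.exp)).aestronglyMeasurable) ?_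
    filter_upwards [hYpos] with ω hω
    rw [Real.norm_eq_abs, Real.norm_eq_abs, abs_mul, Real.abs_exp]
    nlinarith [Real.exp_le_one_iff.2 (by nlinarith : -(u * Y ω) ≤ 0), Real.exp_pos (-(u * Y ω)),
      abs_nonneg (Y ω)]
  set L : ℝ → ℝ := fun u => ∫ ω, Y ω * Real.exp (-(u * Y ω)) with hLdef
  -- g in terms of L
  have hgω : ∀ x : ℝ, g x = L |x| / 2 := by
    intro x
    have hsm : AEStronglyMeasurable (fun ε : ℝ => (ε / 2) * Real.exp (-(ε * |x|)))
        (Measure.map Y ℙ) :=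
      (((continuous_id.div_const 2).mul
        ((continuous_id.mul continuous_const).neg.rexp)).aestronglyMeasurable)
    rw [hg x, hμ, integral_map hYm.aemeasurable hsm]
    have : (fun ω => (Y ω / 2) * Real.exp (-(Y ω * |x|)))
        = fun ω => (Y ω * Real.exp (-(|x| * Y ω))) / 2 := by
      funext ω; rw [mul_comm (Y ω) |x|]; ring
    rw [show (fun ω => Y ω / 2 * Real.exp (-(Y ω * |x|)))
        = fun ω => (Y ω * Real.exp (-(|x| * Y ω))) / 2 from this, integral_div]
  have hLnonneg : ∀ u : ℝ, 0 ≤ L u := by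
    intro u
    apply integral_nonneg_of_ae
    filter_upwards [hYpos] with ω hω
    exact mul_nonneg hω (Real.exp_pos _).le
  have hgnn : ∀ x : ℝ, 0 ≤ g x := fun x => by rw [hgω x]; exact div_nonneg (hLnonneg _) (by norm_num)
  -- continuity of g
  have hL'cont : Continuous (fun s : ℝ => ∫ ω, Y ω * Real.exp (-(max s 0 * Y ω))) := by
    apply continuous_of_dominated (bound := fun ω => |Y ω|)
    · exact fun s => (hYm.mul ((hYm.const_mul _).neg.exp)).aestronglyMeasurable
    · intro s
      filter_upwards [hYpos] with ω hω
      rw [Real.norm_eq_abs, abs_mul, Real.abs_exp]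
      nlinarith [Real.exp_le_one_iff.2
        (by nlinarith [le_max_right s 0] : -(max s 0 * Y ω) ≤ 0),
        Real.exp_pos (-(max s 0 * Y ω)), abs_nonneg (Y ω)]
    · exact hYint.abs
    · exact Filter.Eventually.of_forall fun ω => by
        exact (continuous_const.mul
          (((((continuous_id.max continuous_const).mul continuous_const)).neg).rexp))
  have hgc : Continuous g := by
    have : g = fun x => (∫ ω, Y ω * Real.exp (-(max |x| 0 * Y ω))) / 2 := by
      funext x
      rw [hgω x, hLdef]
      simp [max_eq_left (abs_nonneg x)]
    rw [this]
    exact (hL'cont.comp (continuous_abs)).div_const 2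
  -- monotonicity of L
  have hLmono : ∀ u v : ℝ, 0 ≤ v → v ≤ u → L u ≤ L v := by
    intro u v hv hvu
    apply integral_mono_ae (hLint u (le_trans hv hvu)) (hLint v hv)
    filter_upwards [hYpos] with ω hω
    have : Real.exp (-(u * Y ω)) ≤ Real.exp (-(v * Y ω)) :=
      Real.exp_le_exp.2 (by nlinarith)
    nlinarith
  rcases (hLnonneg Δq).eq_or_lt with hL0 | hL
  · -- degenerate case : L Δq = 0, hence Y = 0 a.e., g ≡ 0
    have hae : (fun ω => Y ω * Real.exp (-(Δq * Y ω))) =ᵐ[(ℙ : Measure Ω)] 0 := by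
      rw [← integral_eq_zero_iff_of_nonneg_ae ?_ (hLint Δq hΔq.le)]
      · exact hL0.symm
      · filter_upwards [hYpos] with ω hω; positivity
    have hY0 : Y =ᵐ[(ℙ : Measure Ω)] 0 := by
      filter_upwards [hae] with ω hω
      have := mul_eq_zero.1 hω
      rcases this with h | h
      · exact h
      · exact absurd h (Real.exp_ne_zero _)
    have hg0 : ∀ x : ℝ, g x = 0 := by
      intro x
      have hz : L |x| = 0 := by
        have h0 : (fun ω => Y ω * Real.exp (-(|x| * Y ω))) =ᵐ[(ℙ : Measure Ω)] 0 := by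
          filter_upwards [hY0] with ω hω
          simp [hω]
        have : L |x| = ∫ ω, Y ω * Real.exp (-(|x| * Y ω)) := rfl
        rw [this, integral_congr_ae h0]
        simp
      rw [hgω x, hz]
      norm_num
    have hz1 : ∫ x in S, g (x - c) = (0:ℝ) := by
      have : (fun x => g (x - c)) = fun _ : ℝ => (0:ℝ) := funext fun x => hg0 _
      rw [this, integral_zero]
    have hz2 : ∫ x in S, g (x - c') = (0:ℝ) := by
      have : (fun x => g (x - c')) = fun _ : ℝ => (0:ℝ) := funext fun x => hg0 _
      rw [this, integral_zero]
    rw [hz1, hz2, mul_zero]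
  -- main case : L Δq > 0
  have hL0pos : 0 < L 0 := lt_of_lt_of_le hL (hLmono Δq 0 le_rfl hΔq.le)
  set C : ℝ := L 0 / L Δq with hCdef
  have hCpos : 0 < C := div_pos hL0pos hL
  -- the numerator equals L 0
  have hnum : (∑ j, a j * ∫ ω, X j ω) = L 0 := by
    have : L 0 = ∫ ω, Y ω := by
      rw [hLdef]; simp
    rw [this, hYfun, integral_finset_sum _ fun i _ => (hXint i).const_mul _]
    exact Finset.sum_congr rfl fun i _ => (integral_const_mul _ _).symm
  -- integrability of X j * exp(-(Δq * Y))
  have hXjYint : ∀ j, Integrable (fun ω => X j ω * Real.exp (-(Δq * Y ω))) ℙ := by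
    intro j
    refine (hXint j).mono
      (((hXmeas j).mul ((hYm.const_mul Δq).neg.exp)).aestronglyMeasurable) ?_
    filter_upwards [hYpos] with ω hω
    rw [Real.norm_eq_abs, Real.norm_eq_abs, abs_mul, Real.abs_exp]
    nlinarith [Real.exp_le_one_iff.2 (by nlinarith : -(Δq * Y ω) ≤ 0),
      Real.exp_pos (-(Δq * Y ω)), abs_nonneg (X j ω)]
  -- the key independence computation for each j
  have hterm : ∀ j, (∫ ω, X j ω * Real.exp (-(a j * Δq) * X j ω)) *
      ∏ i ∈ Finset.univ.erase j, M i (-(a i * Δq)) =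
      ∫ ω, X j ω * Real.exp (-(Δq * Y ω)) := by
    intro j
    set φ : Fin n → ℝ → ℝ := fun i x =>
      if i = j then x * Real.exp (-(a i * Δq) * x) else Real.exp (-(a i * Δq) * x) with hφ
    have hφm : ∀ i, Measurable (φ i) := by
      intro i
      by_cases h : i = j
      · have he : φ i = fun x => x * Real.exp (-(a i * Δq) * x) := by simp [hφ, h]
        rw [he]
        exact measurable_id.mul ((measurable_id.const_mul _).exp)
      · have he : φ i = fun x => Real.exp (-(a i * Δq) * x) := by simp [hφ, h]
        rw [he]
        exact (measurable_id.const_mul _).exp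
    set K : Fin n → Ω → ℝ := fun i => φ i ∘ X i with hK
    have hKindep : iIndepFun K ℙ :=
      hXindep.comp φ hφm
    have hKmeas : ∀ i, Measurable (K i) := fun i => (hφm i).comp (hXmeas i)
    have hKj : K j = fun ω => X j ω * Real.exp (-(a j * Δq) * X j ω) := by
      funext ω; simp [hK, hφ, Function.comp]
    have hKne : ∀ i, i ≠ j → K i = fun ω => Real.exp (-(a i * Δq) * X i ω) := by
      intro i hi; funext ω; simp [hK, hφ, hi, Function.comp]
    have hKint : ∀ i, Integrable (K i) ℙ := by
      intro i
      by_cases h : i = j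
      · subst h
        rw [hKj]
        refine (hXint i).mono
          (((hXmeas i).mul (((hXmeas i).const_mul _).exp)).aestronglyMeasurable) ?_
        filter_upwards [hXpos i] with ω hω
        rw [Real.norm_eq_abs, Real.norm_eq_abs, abs_mul, Real.abs_exp]
        nlinarith [Real.exp_le_one_iff.2
          (by nlinarith [mul_pos (mul_pos (ha i) hΔq) hω] : -(a i * Δq) * X i ω ≤ 0),
          Real.exp_pos (-(a i * Δq) * X i ω), abs_nonneg (X i ω)]
      · rw [hKne i h]
        exact hXexp i _ (by nlinarith [(ha i).le, hΔq.le])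
    obtain ⟨hPint, hPeq⟩ := aux_prod_integral hKindep hKmeas hKint (Finset.univ.erase j)
    have hIF : IndepFun (∏ i ∈ Finset.univ.erase j, K i) (K j) ℙ :=
      hKindep.indepFun_finsetProd_of_notMem hKmeas (Finset.notMem_erase j _)
    have hps : (fun ω => ∏ i ∈ Finset.univ.erase j, K i ω)
        = (∏ i ∈ Finset.univ.erase j, K i) := by
      funext ω; simp [Finset.prod_apply]
    -- pointwise identity
    have hpt : ∀ ω, X j ω * Real.exp (-(Δq * Y ω)) =
        ((∏ i ∈ Finset.univ.erase j, K i) * K j) ω := by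
      intro ω
      have hsum : ∑ i, -(a i * Δq) * X i ω = -(Δq * Y ω) := by
        rw [hY ω, Finset.mul_sum, ← Finset.sum_neg_distrib]
        exact Finset.sum_congr rfl fun i _ => by ring
      have hexp : Real.exp (-(Δq * Y ω)) = ∏ i, Real.exp (-(a i * Δq) * X i ω) := by
        rw [← hsum, Real.exp_sum]
      have hK' : ∀ i, i ∈ Finset.univ.erase j →
          K i ω = Real.exp (-(a i * Δq) * X i ω) := by
        intro i hi
        rw [hKne i (Finset.ne_of_mem_erase hi)]
      simp only [Pi.mul_apply, Finset.prod_apply]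
      rw [Finset.prod_congr rfl hK', hKj]
      rw [hexp, ← Finset.mul_prod_erase Finset.univ
        (fun i => Real.exp (-(a i * Δq) * X i ω)) (Finset.mem_univ j)]
      ring
    have : (∫ ω, X j ω * Real.exp (-(Δq * Y ω)))
        = ∫ ω, ((∏ i ∈ Finset.univ.erase j, K i) * K j) ω := by
      exact integral_congr_ae (Filter.Eventually.of_forall hpt)
    have hprodM : (∏ i ∈ Finset.univ.erase j, ∫ ω, K i ω)
        = ∏ i ∈ Finset.univ.erase j, M i (-(a i * Δq)) :=
      Finset.prod_congr rfl fun i hi => by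
        rw [hKne i (Finset.ne_of_mem_erase hi), hM]
    rw [this, hIF.integral_mul_eq_mul_integral (show Integrable (∏ i ∈ Finset.univ.erase j, K i) ℙ from hps ▸ hPint).1 (hKint j).1, ← hps, hPeq, hprodM]
    simp only [hKj]
    ring

  -- the denominator equals L Δq
  have hden : (∑ j, a j * (∫ ω, X j ω * Real.exp (-(a j * Δq) * X j ω)) *
      ∏ i ∈ Finset.univ.erase j, M i (-(a i * Δq))) = L Δq := by
    have h1 : ∀ j : Fin n, a j * (∫ ω, X j ω * Real.exp (-(a j * Δq) * X j ω)) *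
        ∏ i ∈ Finset.univ.erase j, M i (-(a i * Δq))
        = ∫ ω, a j * (X j ω * Real.exp (-(Δq * Y ω))) := by
      intro j
      rw [mul_assoc, hterm j, integral_const_mul]
    rw [Finset.sum_congr rfl fun j _ => h1 j,
      ← integral_finset_sum _ fun j _ => ((hXjYint j).const_mul _)]
    rw [hLdef]
    apply integral_congr_ae
    apply Filter.Eventually.of_forall
    intro ω
    show ∑ i, a i * (X i ω * Real.exp (-(Δq * Y ω))) = Y ω * Real.exp (-(Δq * Y ω))
    rw [hY ω, Finset.sum_mul]
    exact Finset.sum_congr rfl fun j _ => by ring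
  -- exp ε₀ = C
  have hexpε : Real.exp ε₀ = C := by
    rw [hε₀, hnum, hden, hCdef, Real.exp_log (div_pos hL0pos hL)]
  -- pointwise bound
  have hptw : ∀ b b' : ℝ, |b - b'| ≤ Δq → ∀ x : ℝ, g (x - b) ≤ C * g (x - b') := by
    intro b b' hbb x
    have h1 : L |x - b| * L Δq ≤ L 0 * L (|x - b| + Δq) :=
      aux_corr hYpos hLint |x - b| Δq (abs_nonneg _) hΔq.le
    have htri : |x - b'| ≤ |x - b| + Δq := by
      calc |x - b'| = |(x - b) + (b - b')| := by ring_nf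
        _ ≤ |x - b| + |b - b'| := abs_add_le _ _
        _ ≤ |x - b| + Δq := by linarith
    have h2 : L (|x - b| + Δq) ≤ L |x - b'| := hLmono _ _ (abs_nonneg _) htri
    have h3 : L |x - b| * L Δq ≤ L 0 * L |x - b'| := by
      nlinarith [hL0pos.le]
    have h4 : L |x - b| ≤ C * L |x - b'| := by
      rw [hCdef, div_mul_eq_mul_div, le_div_iff₀ hL]
      nlinarith
    rw [hgω (x - b), hgω (x - b')]
    linarith
  -- measurability on S
  have hmc : AEStronglyMeasurable (fun x => g (x - c)) (volume.restrict S) :=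
    (hgc.comp (continuous_id.sub continuous_const)).aestronglyMeasurable.restrict
  have hmc' : AEStronglyMeasurable (fun x => g (x - c')) (volume.restrict S) :=
    (hgc.comp (continuous_id.sub continuous_const)).aestronglyMeasurable.restrict
  by_cases hi : IntegrableOn (fun x => g (x - c')) S volume
  · have hic : IntegrableOn (fun x => g (x - c)) S volume := by
      refine (hi.const_mul C).mono hmc ?_
      apply Filter.Eventually.of_forall
      intro x
      rw [Real.norm_eq_abs, Real.norm_eq_abs, abs_of_nonneg (hgnn _),
        abs_of_nonneg (mul_nonneg hCpos.le (hgnn _))]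
      exact hptw c c' hcc x
    calc ∫ x in S, g (x - c) ≤ ∫ x in S, C * g (x - c') :=
          setIntegral_mono_on hic (hi.const_mul C) hS fun x _ => hptw c c' hcc x
      _ = C * ∫ x in S, g (x - c') := integral_const_mul _ _
      _ = Real.exp ε₀ * ∫ x in S, g (x - c') := by rw [hexpε]
  · have hnc : ¬ IntegrableOn (fun x => g (x - c)) S volume := by
      intro h
      apply hi
      refine (h.const_mul C).mono hmc' ?_
      apply Filter.Eventually.of_forall
      intro x
      rw [Real.norm_eq_abs, Real.norm_eq_abs, abs_of_nonneg (hgnn _),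
        abs_of_nonneg (mul_nonneg hCpos.le (hgnn _))]
      exact hptw c' c (by rw [abs_sub_comm]; exact hcc) x
    rw [integral_undef hnc, integral_undef hi, mul_zero]
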